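/- arXiv:2007.09618 — 2 statements merged into one kernel-verified Lean document; each statement's English description precedes it below -/
import Mathlib

section
/- Let D be an orientation of an undirected graph G=(V,E) with in-degree vector m. For nodes s and t, the vector m' := m + χ_s − χ_t is again the in-degree vector of some orientation of G if and only if D contains a directed path from s to t. -/
open Finset

/-- Head of edge `e` under orientation `o` (an orientation picks, for each edge,
one of its two end-nodes as head). -/
def ohead {V E : Type*} (ends : E → V × V) (o : E → Bool) (e : E) : V :=
  if o e then (ends e).1 else (ends e).2

/-- Tail of edge `e` under orientation `o`. -/
def otail {V E : Type*} (ends : E → V × V) (o : E → Bool) (e : E) : V :=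
  if o e then (ends e).2 else (ends e).1

/-- In-degree of node `v` in the orientation `o` of the graph. -/
def indeg {V E : Type*} [Fintype E] [DecidableEq V] (ends : E → V × V) (o : E → Bool)
    (v : V) : ℕ :=
  (Finset.univ.filter fun e => ohead ends o e = v).card

/-- `e_G(X)`: number of edges with at least one end-node in `X`. -/
def eG {V E : Type*} [Fintype E] [DecidableEq V] (ends : E → V × V) (X : Finset V) : ℕ :=
  (Finset.univ.filter fun e => (ends e).1 ∈ X ∨ (ends e).2 ∈ X).card

/-- `i_G(X)`: number of edges induced by `X` (both end-nodes in `X`). -/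
def iG {V E : Type*} [Fintype E] [DecidableEq V] (ends : E → V × V) (X : Finset V) : ℕ :=
  (Finset.univ.filter fun e => (ends e).1 ∈ X ∧ (ends e).2 ∈ X).card

/-- `ρ_D(X)`: number of arcs entering `X` (head in `X`, tail outside). -/
def inCut {V E : Type*} [Fintype E] [DecidableEq V] (ends : E → V × V) (o : E → Bool)
    (X : Finset V) : ℕ :=
  (Finset.univ.filter fun e => ohead ends o e ∈ X ∧ otail ends o e ∉ X).card

/-- `d_G(X)`: number of edges with exactly one end-node in `X`. -/
def dG {V E : Type*} [Fintype E] [DecidableEq V] (ends : E → V × V) (X : Finset V) : ℕ :=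
  (Finset.univ.filter fun e =>
    ((ends e).1 ∈ X ∧ (ends e).2 ∉ X) ∨ ((ends e).2 ∈ X ∧ (ends e).1 ∉ X)).card

/-- `Reach ends o s t`: there is a directed path from `s` to `t` in the orientation `o`. -/
def Reach {V E : Type*} (ends : E → V × V) (o : E → Bool) : V → V → Prop :=
  Relation.ReflTransGen fun u v => ∃ e, otail ends o e = u ∧ ohead ends o e = v

/-- `IsDipath ends o s t P`: the list of edges `P` forms a directed walk from `s` to `t`. -/
def IsDipath {V E : Type*} (ends : E → V × V) (o : E → Bool) : V → V → List E → Prop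
  | s, t, [] => s = t
  | s, t, e :: P => otail ends o e = s ∧ IsDipath ends o (ohead ends o e) t P

/-- The components of `m` sorted in decreasing order. -/
def decSeq {V : Type*} [Fintype V] (m : V → ℕ) : List ℕ :=
  (Multiset.sort (Finset.univ.val.map m) (· ≤ ·)).reverse

/-- The components of `m` sorted in increasing order. -/
def incSeq {V : Type*} [Fintype V] (m : V → ℕ) : List ℕ :=
  Multiset.sort (Finset.univ.val.map m) (· ≤ ·)


section Aux
variable {V E : Type*}

lemma ohead_congr (ends : E → V × V) {o o' : E → Bool} {e : E} (h : o' e = o e) :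
    ohead ends o' e = ohead ends o e := by simp [ohead, h]

lemma otail_congr (ends : E → V × V) {o o' : E → Bool} {e : E} (h : o' e = o e) :
    otail ends o' e = otail ends o e := by simp [otail, h]

lemma ohead_flip [DecidableEq E] (ends : E → V × V) (o : E → Bool) (e : E) :
    ohead ends (Function.update o e (!o e)) e = otail ends o e := by
  cases h : o e <;> simp [ohead, otail, h]

lemma isDipath_congr (ends : E → V × V) {o o' : E → Bool} :
    ∀ {s t : V} {P : List E}, (∀ e ∈ P, o' e = o e) →
      IsDipath ends o s t P → IsDipath ends o' s t P := by
  intro s t P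
  induction P generalizing s with
  | nil => intro _ h; exact h
  | cons e P ih =>
      intro hag h
      obtain ⟨h1, h2⟩ := h
      refine ⟨by rw [otail_congr ends (hag e (by simp))]; exact h1, ?_⟩
      rw [ohead_congr ends (hag e (by simp))]
      exact ih (fun f hf => hag f (by simp [hf])) h2

lemma isDipath_middle (ends : E → V × V) (o : E → Bool) {t : V} {e : E} :
    ∀ {A : List E} {s : V} {B : List E}, IsDipath ends o s t (A ++ e :: B) →
      IsDipath ends o (otail ends o e) t (e :: B) := by
  intro A
  induction A with
  | nil => intro s B h; exact ⟨rfl, h.2⟩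
  | cons a A ih => intro s B h; exact ih h.2

lemma isDipath_append (ends : E → V × V) (o : E → Bool) {u t : V} :
    ∀ {P : List E} {s : V} {Q : List E}, IsDipath ends o s u P →
      IsDipath ends o u t Q → IsDipath ends o s t (P ++ Q) := by
  intro P
  induction P with
  | nil => intro s Q h1 h2; cases h1; exact h2
  | cons e P ih => intro s Q h1 h2; exact ⟨h1.1, ih h1.2 h2⟩

lemma reach_exists_dipath (ends : E → V × V) (o : E → Bool) {s t : V}
    (h : Reach ends o s t) : ∃ P : List E, IsDipath ends o s t P := by
  induction h with
  | refl => exact ⟨[], rfl⟩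
  | tail _ hstep ih =>
      obtain ⟨P, hP⟩ := ih
      obtain ⟨e, he1, he2⟩ := hstep
      exact ⟨P ++ [e], isDipath_append ends o hP ⟨he1, by rw [he2]; rfl⟩⟩

lemma indeg_flip [Fintype E] [DecidableEq V] [DecidableEq E]
    (ends : E → V × V) (o : E → Bool) (e : E) (v : V) :
    (indeg ends (Function.update o e (!o e)) v : ℤ)
      = (indeg ends o v : ℤ) + (if v = otail ends o e then 1 else 0)
        - (if v = ohead ends o e then 1 else 0) := by
  classical
  set o' := Function.update o e (!o e) with ho'
  have c1 : (indeg ends o' v : ℤ)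
      = ∑ f ∈ Finset.univ, (if ohead ends o' f = v then (1 : ℤ) else 0) := by
    rw [indeg, Finset.card_filter]
    push_cast
    rfl
  have c2 : (indeg ends o v : ℤ)
      = ∑ f ∈ Finset.univ, (if ohead ends o f = v then (1 : ℤ) else 0) := by
    rw [indeg, Finset.card_filter]
    push_cast
    rfl
  rw [c1, c2,
    Finset.sum_eq_sum_sdiff_singleton_add (Finset.mem_univ e)
      (fun f => if ohead ends o' f = v then (1 : ℤ) else 0),
    Finset.sum_eq_sum_sdiff_singleton_add (Finset.mem_univ e)
      (fun f => if ohead ends o f = v then (1 : ℤ) else 0)]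
  have hrest : (∑ f ∈ Finset.univ \ {e}, (if ohead ends o' f = v then (1 : ℤ) else 0))
      = ∑ f ∈ Finset.univ \ {e}, (if ohead ends o f = v then (1 : ℤ) else 0) := by
    refine Finset.sum_congr rfl fun f hf => ?_
    have hne : f ≠ e := by
      have := (Finset.mem_sdiff.mp hf).2
      simpa using this
    rw [ohead_congr ends (Function.update_of_ne hne _ o)]
  rw [hrest, ohead_flip]
  simp only [eq_comm]
  split_ifs <;> ring

lemma flip_of_dipath [Fintype E] [DecidableEq V] [DecidableEq E]
    (ends : E → V × V) (t : V) :
    ∀ (n : ℕ) (o : E → Bool) (s : V) (P : List E), P.length ≤ n →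
      IsDipath ends o s t P →
      ∃ o' : E → Bool, ∀ v, (indeg ends o' v : ℤ) =
        (indeg ends o v : ℤ) + (if v = s then 1 else 0) - (if v = t then 1 else 0) := by
  intro n
  induction n with
  | zero =>
      intro o s P hlen hP
      have hPnil : P = [] := List.length_eq_zero_iff.mp (Nat.le_zero.mp hlen)
      subst hPnil
      have hst : s = t := hP
      subst hst
      exact ⟨o, fun v => by split_ifs <;> omega⟩
  | succ n ih =>
      intro o s P hlen hP
      match P with
      | [] =>
          have hst : s = t := hP
          subst hst
          exact ⟨o, fun v => by split_ifs <;> omega⟩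
      | e :: P' =>
          obtain ⟨hte, hP'⟩ := hP
          by_cases hmem : e ∈ P'
          · obtain ⟨A, B, hAB⟩ := List.append_of_mem hmem
            subst hAB
            have hmid := isDipath_middle ends o hP'
            rw [hte] at hmid
            refine ih o s (e :: B) ?_ hmid
            simp only [List.length_cons, List.length_append] at hlen ⊢
            omega
          · set o₁ := Function.update o e (!o e) with ho₁
            have hag : ∀ f ∈ P', o₁ f = o f := by
              intro f hf
              have hne : f ≠ e := by intro h; rw [h] at hf; exact hmem hf
              exact Function.update_of_ne hne _ o
            have hP₁ : IsDipath ends o₁ (ohead ends o e) t P' :=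
              isDipath_congr ends hag hP'
            have hlen' : P'.length ≤ n := by
              simp only [List.length_cons] at hlen; omega
            obtain ⟨o', ho'⟩ := ih o₁ (ohead ends o e) P' hlen' hP₁
            refine ⟨o', fun v => ?_⟩
            have hflip := indeg_flip ends o e v
            rw [ho' v, hflip, hte]
            split_ifs <;> omega

lemma sum_indeg_eq [Fintype E] [Fintype V] [DecidableEq V]
    (ends : E → V × V) (o : E → Bool) (X : Finset V) :
    ∑ v ∈ X, indeg ends o v =
      (Finset.univ.filter fun e => ohead ends o e ∈ X).card := by
  classical
  rw [Finset.card_eq_sum_card_fiberwise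
    (f := fun e => ohead ends o e) (t := X) (s := Finset.univ.filter fun e => ohead ends o e ∈ X)
    (fun e he => (Finset.mem_filter.mp he).2)]
  apply Finset.sum_congr rfl
  intro v hv
  rw [indeg]
  congr 1
  ext f
  simp only [Finset.mem_filter, Finset.mem_univ, true_and]
  constructor
  · intro h; exact ⟨by rw [h]; exact hv, h⟩
  · rintro ⟨_, h⟩; exact h

end Aux

/-- For an orientation `D` of `G` with in-degree vector `m` and nodes `s, t`,
the vector `m + χ_s − χ_t` is the in-degree vector of some orientation of `G` iff `D`
contains a directed path from `s` to `t`. -/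
theorem exchange_iff_dipath {V E : Type*} [Fintype V] [Fintype E] [DecidableEq V]
    (ends : E → V × V) (hloop : ∀ e, (ends e).1 ≠ (ends e).2)
    (o : E → Bool) (s t : V) :
    (∃ o' : E → Bool, ∀ v, (indeg ends o' v : ℤ) =
        (indeg ends o v : ℤ) + (if v = s then 1 else 0) - (if v = t then 1 else 0)) ↔
      Reach ends o s t := by
  classical
  constructor
  · rintro ⟨o', ho'⟩
    by_contra hst
    set X : Finset V := Finset.univ.filter (fun v => Reach ends o v t) with hX
    have ht : t ∈ X := Finset.mem_filter.mpr ⟨Finset.mem_univ t, Relation.ReflTransGen.refl⟩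
    have hs : s ∉ X := fun h => hst (Finset.mem_filter.mp h).2
    have hclosed : ∀ e, ohead ends o e ∈ X → otail ends o e ∈ X := by
      intro e he
      rw [Finset.mem_filter] at he ⊢
      refine ⟨Finset.mem_univ _, ?_⟩
      exact Relation.ReflTransGen.head ⟨e, rfl, rfl⟩ he.2
    have hends : ∀ (o'' : E → Bool) e,
        (ohead ends o'' e = (ends e).1 ∧ otail ends o'' e = (ends e).2)
        ∨ (ohead ends o'' e = (ends e).2 ∧ otail ends o'' e = (ends e).1) := by
      intro o'' e
      cases h : o'' e <;> simp [ohead, otail, h]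
    have hsub : (Finset.univ.filter fun e => ohead ends o e ∈ X)
        ⊆ (Finset.univ.filter fun e => ohead ends o' e ∈ X) := by
      intro e he
      simp only [Finset.mem_filter, Finset.mem_univ, true_and] at he ⊢
      have h2 := hclosed e he
      have hboth : (ends e).1 ∈ X ∧ (ends e).2 ∈ X := by
        rcases hends o e with ⟨a, b⟩ | ⟨a, b⟩
        · exact ⟨a ▸ he, b ▸ h2⟩
        · exact ⟨b ▸ h2, a ▸ he⟩
      rcases hends o' e with ⟨a, _⟩ | ⟨a, _⟩
      · rw [a]; exact hboth.1
      · rw [a]; exact hboth.2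
    have hcard := Finset.card_le_card hsub
    rw [← sum_indeg_eq, ← sum_indeg_eq] at hcard
    have hsum : (∑ v ∈ X, (indeg ends o' v : ℤ))
        = ∑ v ∈ X, ((indeg ends o v : ℤ)
            + (if v = s then 1 else 0) - (if v = t then 1 else 0)) :=
      Finset.sum_congr rfl (fun v _ => ho' v)
    rw [Finset.sum_sub_distrib, Finset.sum_add_distrib,
      Finset.sum_ite_eq' X s (fun _ => (1 : ℤ)),
      Finset.sum_ite_eq' X t (fun _ => (1 : ℤ)), if_neg hs, if_pos ht] at hsum
    have h2 : (↑(∑ v ∈ X, indeg ends o v) : ℤ) ≤ ↑(∑ v ∈ X, indeg ends o' v) := by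
      exact_mod_cast hcard
    push_cast at h2
    omega
  · intro h
    obtain ⟨P, hP⟩ := reach_exists_dipath ends o h
    exact flip_of_dipath ends t P.length o s P le_rfl hP
end

section
/- An orientation of an undirected graph G is decreasingly minimal (with respect to in-degree vectors) if and only if it is increasingly maximal. -/
set_option linter.unusedSectionVars false

open Finset

/-! ### Auxiliary material -/

/-- `m' = m - χ u + χ v`. -/
def IsStep {V : Type*} (m m' : V → ℕ) (u v : V) : Prop :=
  u ≠ v ∧ m' u + 1 = m u ∧ m' v = m v + 1 ∧ ∀ w, w ≠ u → w ≠ v → m' w = m w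

lemma sortRev_eq (s : Multiset ℕ) :
    (Multiset.sort s (· ≤ ·)).reverse = Multiset.sort s (· ≥ ·) := by
  refine (fun hp h1 h2 => List.Perm.eq_of_pairwise' (r := (· ≥ ·)) h1 h2 hp) ?_ ?_ ?_
  · exact (List.reverse_perm _).trans
      (Multiset.coe_eq_coe.1 (by rw [Multiset.sort_eq, Multiset.sort_eq]))
  · exact List.pairwise_reverse.2 (Multiset.pairwise_sort s (· ≤ ·))
  · exact Multiset.pairwise_sort s _
lemma inc_lt_list (l : List ℕ) (hl : l.Pairwise (· ≤ ·)) :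
    ∀ a b : ℕ, b + 2 ≤ a →
      Multiset.sort (b ::ₘ a ::ₘ (l : Multiset ℕ)) (· ≤ ·) <
      Multiset.sort ((b + 1) ::ₘ (a - 1) ::ₘ (l : Multiset ℕ)) (· ≤ ·) := by
  induction l with
  | nil =>
    intro a b hab
    rw [show ((([] : List ℕ) : Multiset ℕ)) = 0 from rfl]
    rw [Multiset.sort_cons b _ _ (by intro y hy; simp at hy; omega),
        Multiset.sort_cons (b + 1) _ _ (by intro y hy; simp at hy; omega),
        Multiset.sort_cons a _ _ (by simp), Multiset.sort_cons (a - 1) _ _ (by simp),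
        Multiset.sort_zero]
    exact List.Lex.rel (by omega)
  | cons x xs ih =>
    intro a b hab
    obtain ⟨hx, hxs⟩ := List.pairwise_cons.1 hl
    by_cases hxb : x ≤ b
    · have e1 : (b ::ₘ a ::ₘ ((x :: xs : List ℕ) : Multiset ℕ)) = x ::ₘ (b ::ₘ a ::ₘ (xs : Multiset ℕ)) := by
        rw [← Multiset.cons_coe, Multiset.cons_swap a x, Multiset.cons_swap b x]
      have e2 : ((b + 1) ::ₘ (a - 1) ::ₘ ((x :: xs : List ℕ) : Multiset ℕ))
          = x ::ₘ ((b + 1) ::ₘ (a - 1) ::ₘ (xs : Multiset ℕ)) := by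
        rw [← Multiset.cons_coe, Multiset.cons_swap (a - 1) x, Multiset.cons_swap (b + 1) x]
      rw [e1, e2, Multiset.sort_cons x _ _ ?_, Multiset.sort_cons x _ _ ?_]
      · exact List.Lex.cons (ih hxs a b hab)
      · intro y hy
        rcases Multiset.mem_cons.1 hy with rfl | hy
        · omega
        rcases Multiset.mem_cons.1 hy with rfl | hy
        · omega
        · exact hx y (by exact_mod_cast hy)
      · intro y hy
        rcases Multiset.mem_cons.1 hy with rfl | hy
        · omega
        rcases Multiset.mem_cons.1 hy with rfl | hy
        · omega
        · exact hx y (by exact_mod_cast hy)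
    · push_neg at hxb
      rw [Multiset.sort_cons b _ _ ?_]
      · rcases hL : Multiset.sort ((b + 1) ::ₘ (a - 1) ::ₘ ((x :: xs : List ℕ) : Multiset ℕ)) (· ≤ ·) with _ | ⟨c, L2⟩
        · exfalso
          have : (b + 1) ∈ Multiset.sort ((b + 1) ::ₘ (a - 1) ::ₘ ((x :: xs : List ℕ) : Multiset ℕ)) (· ≤ ·) := by
            rw [Multiset.mem_sort]; exact Multiset.mem_cons_self _ _
          rw [hL] at this; simp at this
        · have hc : c ∈ ((b + 1) ::ₘ (a - 1) ::ₘ ((x :: xs : List ℕ) : Multiset ℕ)) := by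
            rw [← Multiset.mem_sort (r := (· ≤ ·)), hL]; exact List.mem_cons_self
          have hbc : b < c := by
            rcases Multiset.mem_cons.1 hc with rfl | hc
            · omega
            rcases Multiset.mem_cons.1 hc with rfl | hc
            · omega
            · have : x ≤ c := by
                rcases List.mem_cons.1 (by exact_mod_cast hc) with rfl | h
                · exact le_refl _
                · exact hx _ h
              omega
          exact List.Lex.rel hbc
      · intro y hy
        rcases Multiset.mem_cons.1 hy with rfl | hy
        · omega
        · have : y ∈ (x :: xs : List ℕ) := by exact_mod_cast hy
          rcases List.mem_cons.1 this with rfl | h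
          · omega
          · have := hx _ h; omega

lemma dec_lt_list (l : List ℕ) (hl : l.Pairwise (· ≥ ·)) :
    ∀ a b : ℕ, b + 2 ≤ a →
      Multiset.sort ((a - 1) ::ₘ (b + 1) ::ₘ (l : Multiset ℕ)) (· ≥ ·) <
      Multiset.sort (a ::ₘ b ::ₘ (l : Multiset ℕ)) (· ≥ ·) := by
  induction l with
  | nil =>
    intro a b hab
    rw [show ((([] : List ℕ) : Multiset ℕ)) = 0 from rfl]
    rw [Multiset.sort_cons (a - 1) _ _ (by intro y hy; simp at hy; omega),
        Multiset.sort_cons a _ _ (by intro y hy; simp at hy; omega),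
        Multiset.sort_cons (b + 1) _ _ (by simp), Multiset.sort_cons b _ _ (by simp),
        Multiset.sort_zero]
    exact List.Lex.rel (by omega)
  | cons x xs ih =>
    intro a b hab
    obtain ⟨hx, hxs⟩ := List.pairwise_cons.1 hl
    by_cases hxa : a ≤ x
    · have e1 : ((a - 1) ::ₘ (b + 1) ::ₘ ((x :: xs : List ℕ) : Multiset ℕ))
          = x ::ₘ ((a - 1) ::ₘ (b + 1) ::ₘ (xs : Multiset ℕ)) := by
        rw [← Multiset.cons_coe, Multiset.cons_swap (b + 1) x, Multiset.cons_swap (a - 1) x]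
      have e2 : (a ::ₘ b ::ₘ ((x :: xs : List ℕ) : Multiset ℕ))
          = x ::ₘ (a ::ₘ b ::ₘ (xs : Multiset ℕ)) := by
        rw [← Multiset.cons_coe, Multiset.cons_swap b x, Multiset.cons_swap a x]
      rw [e1, e2, Multiset.sort_cons x _ _ ?_, Multiset.sort_cons x _ _ ?_]
      · exact List.Lex.cons (ih hxs a b hab)
      · intro y hy
        rcases Multiset.mem_cons.1 hy with rfl | hy
        · omega
        rcases Multiset.mem_cons.1 hy with rfl | hy
        · omega
        · exact hx y (by exact_mod_cast hy)
      · intro y hy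
        rcases Multiset.mem_cons.1 hy with rfl | hy
        · omega
        rcases Multiset.mem_cons.1 hy with rfl | hy
        · omega
        · exact hx y (by exact_mod_cast hy)
    · push_neg at hxa
      rw [Multiset.sort_cons a _ _ ?_]
      · rcases hL : Multiset.sort ((a - 1) ::ₘ (b + 1) ::ₘ ((x :: xs : List ℕ) : Multiset ℕ)) (· ≥ ·) with _ | ⟨c, L2⟩
        · exfalso
          have : (a - 1) ∈ Multiset.sort ((a - 1) ::ₘ (b + 1) ::ₘ ((x :: xs : List ℕ) : Multiset ℕ)) (· ≥ ·) := by
            rw [Multiset.mem_sort]; exact Multiset.mem_cons_self _ _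
          rw [hL] at this; simp at this
        · have hc : c ∈ ((a - 1) ::ₘ (b + 1) ::ₘ ((x :: xs : List ℕ) : Multiset ℕ)) := by
            rw [← Multiset.mem_sort (r := (· ≥ ·)), hL]; exact List.mem_cons_self
          have hca : c < a := by
            rcases Multiset.mem_cons.1 hc with rfl | hc
            · omega
            rcases Multiset.mem_cons.1 hc with rfl | hc
            · omega
            · have : c ≤ x := by
                rcases List.mem_cons.1 (by exact_mod_cast hc) with rfl | h
                · exact le_refl _
                · exact hx _ h
              omega
          exact List.Lex.rel hca
      · intro y hy
        rcases Multiset.mem_cons.1 hy with rfl | hy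
        · omega
        · have : y ∈ (x :: xs : List ℕ) := by exact_mod_cast hy
          rcases List.mem_cons.1 this with rfl | h
          · omega
          · have := hx _ h; omega

lemma inc_lt_ms (t : Multiset ℕ) (a b : ℕ) (hab : b + 2 ≤ a) :
    Multiset.sort (b ::ₘ a ::ₘ t) (· ≤ ·) < Multiset.sort ((b + 1) ::ₘ (a - 1) ::ₘ t) (· ≤ ·) := by
  have h := inc_lt_list (Multiset.sort t (· ≤ ·)) (Multiset.pairwise_sort t _) a b hab
  rwa [Multiset.sort_eq] at h

lemma dec_lt_ms (t : Multiset ℕ) (a b : ℕ) (hab : b + 2 ≤ a) :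
    Multiset.sort ((a - 1) ::ₘ (b + 1) ::ₘ t) (· ≥ ·) < Multiset.sort (a ::ₘ b ::ₘ t) (· ≥ ·) := by
  have h := dec_lt_list (Multiset.sort t (· ≥ ·)) (Multiset.pairwise_sort t _) a b hab
  rwa [Multiset.sort_eq] at h
section Graph

variable {V E : Type*} [Fintype V] [Fintype E] [DecidableEq V] [DecidableEq E] (ends : E → V × V)

lemma ohead_ne_otail (hloop : ∀ e, (ends e).1 ≠ (ends e).2) (o : E → Bool) (e : E) :
    ohead ends o e ≠ otail ends o e := by
  unfold ohead otail
  cases o e <;> simp [hloop e, (hloop e).symm]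

lemma ohead_update_ne (o : E → Bool) (e e' : E) (b : Bool) (h : e' ≠ e) :
    ohead ends (Function.update o e b) e' = ohead ends o e' := by
  unfold ohead; rw [Function.update_of_ne h]

lemma ohead_update_self (o : E → Bool) (e : E) :
    ohead ends (Function.update o e (!o e)) e = otail ends o e := by
  unfold ohead otail; rw [Function.update_self]; cases o e <;> simp

lemma indeg_update (hloop : ∀ e, (ends e).1 ≠ (ends e).2) (o : E → Bool) (e : E) :
    indeg ends (Function.update o e (!o e)) (otail ends o e) = indeg ends o (otail ends o e) + 1 ∧
    indeg ends (Function.update o e (!o e)) (ohead ends o e) + 1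
      = indeg ends o (ohead ends o e) ∧
    ∀ w, w ≠ otail ends o e → w ≠ ohead ends o e →
      indeg ends (Function.update o e (!o e)) w = indeg ends o w := by
  set o1 := Function.update o e (!o e) with ho1
  have hne := ohead_ne_otail ends hloop o e
  have key : ∀ e', e' ≠ e → ohead ends o1 e' = ohead ends o e' :=
    fun e' h => ohead_update_ne ends o e e' (!o e) h
  have keye : ohead ends o1 e = otail ends o e := ohead_update_self ends o e
  refine ⟨?_, ?_, ?_⟩
  · have hset : (Finset.univ.filter fun e' => ohead ends o1 e' = otail ends o e)
        = insert e (Finset.univ.filter fun e' => ohead ends o e' = otail ends o e) := by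
      ext e'
      by_cases h : e' = e
      · subst h; simp [keye]
      · simp [h, key e' h]
    have hnotmem : e ∉ (Finset.univ.filter fun e' => ohead ends o e' = otail ends o e) := by
      simp [hne]
    rw [indeg, hset, Finset.card_insert_of_notMem hnotmem, indeg]
  · have hset : (Finset.univ.filter fun e' => ohead ends o1 e' = ohead ends o e)
        = (Finset.univ.filter fun e' => ohead ends o e' = ohead ends o e).erase e := by
      ext e'
      by_cases h : e' = e
      · subst h; simp [keye, hne.symm]
      · simp [h, key e' h]
    have hmem : e ∈ (Finset.univ.filter fun e' => ohead ends o e' = ohead ends o e) := by simp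
    have hpos : 0 < (Finset.univ.filter fun e' => ohead ends o e' = ohead ends o e).card :=
      Finset.card_pos.2 ⟨e, hmem⟩
    rw [indeg, hset, Finset.card_erase_of_mem hmem, indeg]
    omega
  · intro w hwt hwh
    rw [indeg, indeg]
    congr 1
    ext e'
    by_cases h : e' = e
    · subst h; simp [keye, hwt.symm, hwh.symm, Ne.symm hwt, Ne.symm hwh]
    · simp [h, key e' h]

lemma exists_head_edge (o o' : E → Bool) (u : V) (h : indeg ends o u < indeg ends o' u) :
    ∃ e, ohead ends o' e = u ∧ ohead ends o e ≠ u := by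
  by_contra hc
  push_neg at hc
  have : (Finset.univ.filter fun e => ohead ends o' e = u)
      ⊆ (Finset.univ.filter fun e => ohead ends o e = u) := by
    intro e he
    simp only [Finset.mem_filter, Finset.mem_univ, true_and] at he ⊢
    exact hc e he
  have := Finset.card_le_card this
  rw [indeg, indeg] at h
  omega

lemma diff_card_update (o o' : E → Bool) (e : E) (h : o e ≠ o' e) :
    (Finset.univ.filter fun e' => o e' ≠ Function.update o' e (!o' e) e')
      = (Finset.univ.filter fun e' => o e' ≠ o' e').erase e := by
  ext e'
  by_cases he : e' = e
  · subst he
    have : Function.update o' e' (!o' e') e' = o e' := by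
      rw [Function.update_self]; revert h; cases o e' <;> cases o' e' <;> simp
    simp [this, h]
  · simp [he, Function.update_of_ne he]

lemma flipPath_aux (hloop : ∀ e, (ends e).1 ≠ (ends e).2) :
    ∀ n (o o' : E → Bool) (u : V),
      (Finset.univ.filter fun e => o e ≠ o' e).card ≤ n →
      indeg ends o u < indeg ends o' u →
      ∃ v o'', indeg ends o' v < indeg ends o v ∧
        IsStep (indeg ends o') (indeg ends o'') u v := by
  intro n
  induction n with
  | zero =>
    intro o o' u hcard h
    obtain ⟨e, he1, he2⟩ := exists_head_edge ends o o' u h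
    have hne : o e ≠ o' e := by
      intro hq
      exact he2 (by rw [← he1]; unfold ohead; rw [hq])
    have hmem : e ∈ Finset.univ.filter fun e' => o e' ≠ o' e' := by simp [hne]
    have := Finset.card_pos.2 ⟨e, hmem⟩
    omega
  | succ n ih =>
    intro o o' u hcard h
    obtain ⟨e, he1, he2⟩ := exists_head_edge ends o o' u h
    have hne : o e ≠ o' e := by
      intro hq
      exact he2 (by rw [← he1]; unfold ohead; rw [hq])
    obtain ⟨hu1, hu2, hu3⟩ := indeg_update ends hloop o' e
    rw [he1] at hu2 hu3
    set o1 := Function.update o' e (!o' e) with ho1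
    set t := otail ends o' e with ht
    have htu : t ≠ u := by rw [ht, ← he1]; exact (ohead_ne_otail ends hloop o' e).symm
    have hcard1 : (Finset.univ.filter fun e' => o e' ≠ o1 e').card ≤ n := by
      rw [ho1, diff_card_update o o' e hne]
      have hmem : e ∈ Finset.univ.filter fun e' => o e' ≠ o' e' := by simp [hne]
      rw [Finset.card_erase_of_mem hmem]
      have := Finset.card_pos.2 ⟨e, hmem⟩
      omega
    by_cases hc : indeg ends o t ≤ indeg ends o' t
    · -- recurse at t
      have hrec : indeg ends o t < indeg ends o1 t := by omega
      obtain ⟨v, o'', hv, hstep⟩ := ih o o1 t hcard1 hrec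
      obtain ⟨htv, hs1, hs2, hs3⟩ := hstep
      have hvu : v ≠ u := by rintro rfl; omega
      have hveq : indeg ends o1 v = indeg ends o' v := hu3 v (Ne.symm htv) hvu
      have hueq : indeg ends o'' u = indeg ends o1 u := hs3 u (Ne.symm htu) (Ne.symm hvu)
      refine ⟨v, o'', by omega, Ne.symm hvu, by omega, by omega, ?_⟩
      intro w hwu hwv
      by_cases hwt : w = t
      · subst hwt; omega
      · rw [hs3 w hwt hwv, hu3 w hwt hwu]
    · -- done: v = t, o'' = o1
      exact ⟨t, o1, by omega, htu.symm, by omega, by omega,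
        fun w hwu hwt => hu3 w hwt hwu⟩

lemma flipPath (hloop : ∀ e, (ends e).1 ≠ (ends e).2) (o o' : E → Bool) (u : V)
    (h : indeg ends o u < indeg ends o' u) :
    ∃ v o'', indeg ends o' v < indeg ends o v ∧
      IsStep (indeg ends o') (indeg ends o'') u v :=
  flipPath_aux ends hloop _ o o' u le_rfl h

lemma flipPath'_aux (hloop : ∀ e, (ends e).1 ≠ (ends e).2) :
    ∀ n (o o' : E → Bool) (u : V),
      (Finset.univ.filter fun e => o e ≠ o' e).card ≤ n →
      indeg ends o' u < indeg ends o u →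
      ∃ v o'', indeg ends o v < indeg ends o' v ∧
        IsStep (indeg ends o') (indeg ends o'') v u := by
  intro n
  induction n with
  | zero =>
    intro o o' u hcard h
    obtain ⟨e, he1, he2⟩ := exists_head_edge ends o' o u h
    have hne : o e ≠ o' e := by
      intro hq
      exact he2 (by rw [← he1]; unfold ohead; rw [hq])
    have hmem : e ∈ Finset.univ.filter fun e' => o e' ≠ o' e' := by simp [hne]
    have := Finset.card_pos.2 ⟨e, hmem⟩
    omega
  | succ n ih =>
    intro o o' u hcard h
    obtain ⟨e, he1, he2⟩ := exists_head_edge ends o' o u h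
    have hne : o e ≠ o' e := by
      intro hq
      exact he2 (by rw [← he1]; unfold ohead; rw [hq])
    have hbool : o' e = !(o e) := by revert hne; cases o e <;> cases o' e <;> simp
    have htail : otail ends o' e = u := by
      rw [← he1]; unfold otail ohead; rw [hbool]; cases o e <;> simp
    obtain ⟨hu1, hu2, hu3⟩ := indeg_update ends hloop o' e
    rw [htail] at hu1 hu3
    set o1 := Function.update o' e (!o' e) with ho1
    set h' := ohead ends o' e with hh'
    have hh'u : h' ≠ u := by rw [hh', ← htail]; exact ohead_ne_otail ends hloop o' e
    have hcard1 : (Finset.univ.filter fun e' => o e' ≠ o1 e').card ≤ n := by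
      rw [ho1, diff_card_update o o' e hne]
      have hmem : e ∈ Finset.univ.filter fun e' => o e' ≠ o' e' := by simp [hne]
      rw [Finset.card_erase_of_mem hmem]
      have := Finset.card_pos.2 ⟨e, hmem⟩
      omega
    by_cases hc : indeg ends o h' < indeg ends o' h'
    · -- done: v = h', o'' = o1
      exact ⟨h', o1, hc, hh'u, by omega, by omega, fun w hwh' hwu => hu3 w hwu hwh'⟩
    · -- recurse at h'
      have hrec : indeg ends o1 h' < indeg ends o h' := by omega
      obtain ⟨v, o'', hv, hstep⟩ := ih o o1 h' hcard1 hrec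
      obtain ⟨hvh', hs1, hs2, hs3⟩ := hstep
      have hvu : v ≠ u := by rintro rfl; omega
      have hveq : indeg ends o1 v = indeg ends o' v := hu3 v hvu hvh'
      have hueq : indeg ends o'' u = indeg ends o1 u := hs3 u (Ne.symm hvu) (Ne.symm hh'u)
      refine ⟨v, o'', by omega, hvu, by omega, by omega, ?_⟩
      intro w hwv hwu
      by_cases hwh' : w = h'
      · subst hwh'; omega
      · rw [hs3 w hwv hwh', hu3 w hwu hwh']

lemma flipPath' (hloop : ∀ e, (ends e).1 ≠ (ends e).2) (o o' : E → Bool) (u : V)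
    (h : indeg ends o' u < indeg ends o u) :
    ∃ v o'', indeg ends o v < indeg ends o' v ∧
      IsStep (indeg ends o') (indeg ends o'') v u :=
  flipPath'_aux ends hloop _ o o' u le_rfl h

lemma sum_indeg (o : E → Bool) : ∑ v, indeg ends o v = Fintype.card E := by
  rw [← Finset.card_univ,
    Finset.card_eq_sum_card_fiberwise (fun x _ => Finset.mem_univ (ohead ends o x))]
  rfl

lemma exists_lt_indeg (o o' : E → Bool) (h : indeg ends o ≠ indeg ends o') :
    ∃ u, indeg ends o u < indeg ends o' u := by
  by_contra hc
  push_neg at hc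
  obtain ⟨w, hw⟩ := Function.ne_iff.1 h
  have hlt : ∑ v, indeg ends o' v < ∑ v, indeg ends o v :=
    Finset.sum_lt_sum (fun i _ => hc i)
      ⟨w, Finset.mem_univ w, lt_of_le_of_ne (hc w) (Ne.symm hw)⟩
  rw [sum_indeg, sum_indeg] at hlt
  omega

end Graph

section Dist

variable {V : Type*} [Fintype V] [DecidableEq V]

/-- ℓ₁ distance between two vectors. -/
def distV (m m' : V → ℕ) : ℕ := ∑ w, ((m w - m' w) + (m' w - m w))

lemma distV_eq_zero {m m' : V → ℕ} (h : distV m m' = 0) : m = m' := by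
  funext w
  have := (Finset.sum_eq_zero_iff.1 h) w (Finset.mem_univ w)
  omega

lemma distV_lt {m m' m'' : V → ℕ} {u v : V} (hs : IsStep m' m'' u v)
    (h1 : m u < m' u) (h2 : m' v < m v) : distV m m'' < distV m m' := by
  obtain ⟨huv, hs1, hs2, hs3⟩ := hs
  refine Finset.sum_lt_sum (fun i _ => ?_) ⟨u, Finset.mem_univ u, ?_⟩
  · by_cases hiu : i = u
    · subst hiu; omega
    · by_cases hiv : i = v
      · subst hiv; omega
      · rw [hs3 i hiu hiv]
  · omega

lemma step_maps {m m' : V → ℕ} {u v : V} (h : IsStep m m' u v) :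
    ∃ t : Multiset ℕ, Finset.univ.val.map m = m u ::ₘ m v ::ₘ t ∧
      Finset.univ.val.map m' = (m u - 1) ::ₘ (m v + 1) ::ₘ t := by
  obtain ⟨huv, h1, h2, h3⟩ := h
  have hnd : Finset.univ.val.Nodup (α := V) := Finset.univ.nodup
  have hnd' : (Finset.univ.val.erase u).Nodup (α := V) := hnd.erase u
  have hu : u ∈ Finset.univ.val (α := V) := Finset.mem_univ u
  have hv : v ∈ Finset.univ.val.erase u :=
    (Multiset.mem_erase_of_ne (Ne.symm huv)).2 (Finset.mem_univ v)
  set s := (Finset.univ.val.erase u).erase v with hsdef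
  have e0 : Finset.univ.val = u ::ₘ v ::ₘ s := by
    rw [hsdef, Multiset.cons_erase hv, Multiset.cons_erase hu]
  have hmem : ∀ w ∈ s, w ≠ u ∧ w ≠ v := by
    intro w hw
    rw [hsdef] at hw
    have h4 := (hnd'.mem_erase_iff).1 hw
    have h5 := (hnd.mem_erase_iff).1 h4.2
    exact ⟨h5.1, h4.1⟩
  refine ⟨s.map m, ?_, ?_⟩
  · rw [e0, Multiset.map_cons, Multiset.map_cons]
  · rw [e0, Multiset.map_cons, Multiset.map_cons,
      show m' u = m u - 1 by omega, show m' v = m v + 1 from h2,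
      Multiset.map_congr rfl (fun w hw => h3 w (hmem w hw).1 (hmem w hw).2)]

lemma step_lt {m m' : V → ℕ} {u v : V} (h : IsStep m m' u v) (hgap : m v + 2 ≤ m u) :
    decSeq m' < decSeq m ∧ incSeq m < incSeq m' := by
  obtain ⟨t, e1, e2⟩ := step_maps h
  constructor
  · show decSeq m' < decSeq m
    unfold decSeq
    rw [sortRev_eq, sortRev_eq, e1, e2]
    exact dec_lt_ms t (m u) (m v) hgap
  · unfold incSeq
    rw [e1, e2, Multiset.cons_swap (m u) (m v) t,
      Multiset.cons_swap (m u - 1) (m v + 1) t]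
    exact inc_lt_ms t (m u) (m v) hgap

lemma step_eq {m m' : V → ℕ} {u v : V} (h : IsStep m m' u v) (heq : m v + 1 = m u) :
    Finset.univ.val.map m' = Finset.univ.val.map m := by
  obtain ⟨t, e1, e2⟩ := step_maps h
  rw [e1, e2, show m u - 1 = m v by omega, show m v + 1 = m u from heq,
    Multiset.cons_swap]

lemma step_le {m m' : V → ℕ} {u v : V} (h : IsStep m m' u v) (hlt : m v < m u) :
    decSeq m' ≤ decSeq m ∧ incSeq m ≤ incSeq m' := by
  by_cases heq : m v + 1 = m u
  · have he := step_eq h heq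
    constructor
    · unfold decSeq; rw [he]
    · unfold incSeq; rw [he]
  · have hgap : m v + 2 ≤ m u := by omega
    exact ⟨(step_lt h hgap).1.le, (step_lt h hgap).2.le⟩

end Dist

section Main

variable {V E : Type*} [Fintype V] [Fintype E] [DecidableEq V] [DecidableEq E]
  (ends : E → V × V)

lemma locOpt_decmin (hloop : ∀ e, (ends e).1 ≠ (ends e).2) (o : E → Bool)
    (hloc : ∀ o₁ u v, IsStep (indeg ends o) (indeg ends o₁) u v →
      indeg ends o v + 2 ≤ indeg ends o u → False) :
    ∀ o', decSeq (indeg ends o) ≤ decSeq (indeg ends o') := by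
  suffices H : ∀ n (o' : E → Bool), distV (indeg ends o) (indeg ends o') ≤ n →
      decSeq (indeg ends o) ≤ decSeq (indeg ends o') by
    intro o'; exact H _ o' le_rfl
  intro n
  induction n with
  | zero =>
    intro o' hd
    rw [distV_eq_zero (Nat.le_zero.1 hd)]
  | succ n ih =>
    intro o' hd
    by_cases he : indeg ends o = indeg ends o'
    · rw [he]
    · obtain ⟨u0, hu0⟩ := exists_lt_indeg ends o o' he
      set S := Finset.univ.filter (fun w => indeg ends o w < indeg ends o' w) with hS
      obtain ⟨u, huS, humax⟩ := Finset.exists_max_image S (indeg ends o')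
        ⟨u0, by simp [hS, hu0]⟩
      have hu : indeg ends o u < indeg ends o' u := by
        have := huS; rw [hS] at this; simpa using this
      obtain ⟨v, o'', hv, hstep⟩ := flipPath ends hloop o o' u hu
      by_cases hcase : indeg ends o' v < indeg ends o' u
      · have h1 := (step_le hstep hcase).1
        have h2 : distV (indeg ends o) (indeg ends o'') < distV (indeg ends o) (indeg ends o') :=
          distV_lt hstep hu hv
        exact le_trans (ih o'' (by omega)) h1
      · exfalso
        push_neg at hcase
        obtain ⟨w, ow, hw, hstep2⟩ := flipPath ends hloop o' o v hv
        have hwS : w ∈ S := by rw [hS]; simpa using hw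
        have hwmax : indeg ends o' w ≤ indeg ends o' u := humax w hwS
        exact hloc ow v w hstep2 (by omega)

lemma locOpt_incmax (hloop : ∀ e, (ends e).1 ≠ (ends e).2) (o : E → Bool)
    (hloc : ∀ o₁ u v, IsStep (indeg ends o) (indeg ends o₁) u v →
      indeg ends o v + 2 ≤ indeg ends o u → False) :
    ∀ o', incSeq (indeg ends o') ≤ incSeq (indeg ends o) := by
  suffices H : ∀ n (o' : E → Bool), distV (indeg ends o) (indeg ends o') ≤ n →
      incSeq (indeg ends o') ≤ incSeq (indeg ends o) by
    intro o'; exact H _ o' le_rfl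
  intro n
  induction n with
  | zero =>
    intro o' hd
    rw [distV_eq_zero (Nat.le_zero.1 hd)]
  | succ n ih =>
    intro o' hd
    by_cases he : indeg ends o = indeg ends o'
    · rw [he]
    · have he' : indeg ends o' ≠ indeg ends o := fun hq => he hq.symm
      obtain ⟨u0, hu0⟩ := exists_lt_indeg ends o' o he'
      set S := Finset.univ.filter (fun w => indeg ends o' w < indeg ends o w) with hS
      obtain ⟨u, huS, humin⟩ := Finset.exists_min_image S (indeg ends o')
        ⟨u0, by simp [hS, hu0]⟩
      have hu : indeg ends o' u < indeg ends o u := by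
        have := huS; rw [hS] at this; simpa using this
      obtain ⟨v, o'', hv, hstep⟩ := flipPath' ends hloop o o' u hu
      by_cases hcase : indeg ends o' u < indeg ends o' v
      · have h1 := (step_le hstep hcase).2
        have h2 : distV (indeg ends o) (indeg ends o'') < distV (indeg ends o) (indeg ends o') :=
          distV_lt hstep hv hu
        exact le_trans h1 (ih o'' (by omega))
      · exfalso
        push_neg at hcase
        obtain ⟨w, ow, hw, hstep2⟩ := flipPath' ends hloop o' o v hv
        have hwS : w ∈ S := by rw [hS]; simpa using hw
        have hwmin : indeg ends o' u ≤ indeg ends o' w := humin w hwS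
        exact hloc ow w v hstep2 (by omega)

end Main

/-- An orientation of `G` is decreasingly minimal (w.r.t. in-degree vectors)
iff it is increasingly maximal. -/
theorem decmin_iff_incmax_orientation {V E : Type*} [Fintype V] [Fintype E] [DecidableEq V]
    (ends : E → V × V) (hloop : ∀ e, (ends e).1 ≠ (ends e).2) (o : E → Bool) :
    (∀ o' : E → Bool, decSeq (indeg ends o) ≤ decSeq (indeg ends o')) ↔
      (∀ o' : E → Bool, incSeq (indeg ends o') ≤ incSeq (indeg ends o)) := by
  classical
  constructor
  · intro hdec o'
    refine locOpt_incmax ends hloop o ?_ o'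
    intro o₁ u v hstep hgap
    exact absurd (hdec o₁) (not_le.2 (step_lt hstep hgap).1)
  · intro hinc o'
    refine locOpt_decmin ends hloop o ?_ o'
    intro o₁ u v hstep hgap
    exact absurd (hinc o₁) (not_le.2 (step_lt hstep hgap).2)
end
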